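/- Let M be a q-starshaped subset of a real normed space X and T : M → M a generalized γ-contraction mapping of integral type, i.e., for each x, y ∈ M and each k ∈ (0,1), ∫₀^{‖Tx−Ty‖} φ(t)dt ≤ ∫₀^{(1/k)γ(‖x−y‖)} φ(t)dt, where γ is continuous, nondecreasing, and satisfies γ(t) < t for t > 0. If M is bounded and complete and T is hemicompact, then Fix(T) ≠ ∅. -/

import Mathlib

open MeasureTheory Filter Topology Set

noncomputable section

/-- The integral `∫₀^a φ(t) dt`. -/
def intPhi (phi : ℝ → ℝ) (a : ℝ) : ℝ := ∫ t in (0:ℝ)..a, phi t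

/-- `φ : [0,∞) → [0,∞)` is Lebesgue integrable, summable, nonnegative, with
`∫₀^ε φ(t)dt > 0` for all `ε > 0`. -/
def PhiAdmissible (phi : ℝ → ℝ) : Prop :=
  (∀ t ≥ (0:ℝ), 0 ≤ phi t) ∧ (∀ b : ℝ, IntervalIntegrable phi volume 0 b) ∧
  ∀ ε > (0:ℝ), 0 < intPhi phi ε

/-- Altering distance function: nondecreasing, continuous, `ψ t = 0 ↔ t = 0` on `[0,∞)`. -/
def AlteringDistance (ψ : ℝ → ℝ) : Prop :=
  MonotoneOn ψ (Ici 0) ∧ ContinuousOn ψ (Ici 0) ∧ ∀ t ≥ (0:ℝ), (ψ t = 0 ↔ t = 0)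

/-- Ultra altering distance function: continuous, nondecreasing, positive on `(0,∞)`,
nonnegative at `0`. -/
def UltraAltering (φu : ℝ → ℝ) : Prop :=
  ContinuousOn φu (Ici 0) ∧ MonotoneOn φu (Ici 0) ∧ (∀ t > (0:ℝ), 0 < φu t) ∧ 0 ≤ φu 0

/-- C-class function: continuous on `[0,∞)²`, `F s t ≤ s`, and `F s t = s → s = 0 ∨ t = 0`. -/
def CClassFun (F : ℝ → ℝ → ℝ) : Prop :=
  ContinuousOn (Function.uncurry F) (Ici 0 ×ˢ Ici 0) ∧
  (∀ s ≥ (0:ℝ), ∀ t ≥ (0:ℝ), F s t ≤ s) ∧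
  (∀ s ≥ (0:ℝ), ∀ t ≥ (0:ℝ), F s t = s → s = 0 ∨ t = 0)

/-- The triple `(ψ, φᵤ, F)` is monotone. -/
def MonotoneTriple (ψ φu : ℝ → ℝ) (F : ℝ → ℝ → ℝ) : Prop :=
  ∀ x y : ℝ, 0 ≤ x → x ≤ y → F (ψ x) (φu x) ≤ F (ψ y) (φu y)

/-- The triple `(ψ, φᵤ, F)` is strictly monotone. -/
def StrictMonotoneTriple (ψ φu : ℝ → ℝ) (F : ℝ → ℝ → ℝ) : Prop :=
  ∀ x y : ℝ, 0 ≤ x → x < y → F (ψ x) (φu x) < F (ψ y) (φu y)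

/-- `γ : (0,∞) → (0,∞)` is nondecreasing with `γ t < t` for all `t > 0`. -/
def GammaAdmissible (γ : ℝ → ℝ) : Prop :=
  (∀ t > (0:ℝ), 0 < γ t) ∧ MonotoneOn γ (Ioi 0) ∧ ∀ t > (0:ℝ), γ t < t

variable {X : Type*} [NormedAddCommGroup X] [NormedSpace ℝ X]

/-- Fixed points of `T` lying in `M`. -/
def FixOn (T : X → X) (M : Set X) : Set X := {x ∈ M | T x = x}

/-- Points of coincidence `PC(S,T)` of the pair `(S,T)` over the set `M`. -/
def PCset (S T : X → X) (M : Set X) : Set X := {w | ∃ x ∈ M, S x = w ∧ T x = w}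

/-- `(S,T)` is a generalized JH-operator pair with order `n` on `M`:
there is `x ∈ M` and `w = Sx = Tx ∈ PC(S,T)` with `‖w - x‖ ≤ (δ(PC(S,T)))ⁿ`. -/
def GenJHOp (S T : X → X) (M : Set X) (n : ℕ) : Prop :=
  ∃ x ∈ M, S x = T x ∧ ‖S x - x‖ ≤ Metric.diam (PCset S T M) ^ n

/-- `(S,T)` is a generalized JH-suboperator pair with order `n` on `M` (w.r.t. `q`):
for each `k ∈ [0,1]`, `(S, T_k)` with `T_k x = (1-k)q + kTx` is a generalized JH-operator
pair with order `n`. -/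
def GenJHSubOp (S T : X → X) (M : Set X) (q : X) (n : ℕ) : Prop :=
  ∀ k ∈ Icc (0:ℝ) 1, GenJHOp S (fun x => (1 - k) • q + k • T x) M n

/-- `M` is `q`-starshaped. -/
def Starshaped (M : Set X) (q : X) : Prop :=
  q ∈ M ∧ ∀ x ∈ M, segment ℝ q x ⊆ M

def m1 (S T : X → X) (x y : X) : ℝ :=
  max (max ‖S x - S y‖ ‖S x - T x‖)
    (max ‖S y - T y‖ ((‖T x - T y‖ + ‖S y - T x‖) / 2))

def n1 (S T : X → X) (x y : X) : ℝ :=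
  max ‖S x - S y‖ (max ‖T x - S x‖ ‖S y - T y‖)

def m2 (S T : X → X) (x y : X) : ℝ :=
  max (max ‖S x - S y‖ ‖S x - T x‖)
    (max ‖S y - T y‖ ((‖S x - T y‖ + ‖S y - T x‖) / 2))

def m3 (S T : X → X) (q x y : X) : ℝ :=
  max (max ‖S x - S y‖ (Metric.infDist (S x) (segment ℝ q (T x))))
    (max (Metric.infDist (S y) (segment ℝ q (T y)))
      ((Metric.infDist (S x) (segment ℝ q (T y)) +
        Metric.infDist (S y) (segment ℝ q (T x))) / 2))

/-- `Y^{a} = {f_a(k) : k ∈ [0,1]}` for a family `f`. -/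
def Yfam (f : X → ℝ → X) (a : X) : Set X := f a '' Icc (0:ℝ) 1

def m4 (f : X → ℝ → X) (S T : X → X) (x y : X) : ℝ :=
  max (max ‖S x - S y‖ (Metric.infDist (S x) (Yfam f (T x))))
    (max (Metric.infDist (S y) (Yfam f (T y)))
      ((Metric.infDist (S x) (Yfam f (T y)) +
        Metric.infDist (S y) (Yfam f (T x))) / 2))

/-- `ℑ = {f_α}_{α ∈ M}` is a family of functions `[0,1] → M` with `f_α(1) = α`. -/
def FamilyOn (f : X → ℝ → X) (M : Set X) : Prop :=
  (∀ a ∈ M, ∀ t ∈ Icc (0:ℝ) 1, f a t ∈ M) ∧ ∀ a ∈ M, f a 1 = a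

/-- The family is contractive with contractiveness function `Φ : (0,1) → (0,1)`. -/
def ContractiveFamily (f : X → ℝ → X) (M : Set X) (Phi : ℝ → ℝ) : Prop :=
  (∀ t ∈ Ioo (0:ℝ) 1, Phi t ∈ Ioo (0:ℝ) 1) ∧
  ∀ a ∈ M, ∀ b ∈ M, ∀ t ∈ Ioo (0:ℝ) 1, ‖f a t - f b t‖ ≤ Phi t * ‖a - b‖

/-- The family is jointly continuous: `tₙ → t₀` and `αₙ → α₀` imply
`f_{αₙ}(tₙ) → f_{α₀}(t₀)`. -/
def JointlyContinuousFamily (f : X → ℝ → X) (M : Set X) : Prop :=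
  ∀ (tn : ℕ → ℝ) (t0 : ℝ), (∀ n, tn n ∈ Icc (0:ℝ) 1) → t0 ∈ Icc (0:ℝ) 1 →
    Tendsto tn atTop (𝓝 t0) →
    ∀ (an : ℕ → X) (a0 : X), (∀ n, an n ∈ M) → a0 ∈ M →
      Tendsto an atTop (𝓝 a0) →
      Tendsto (fun n => f (an n) (tn n)) atTop (𝓝 (f a0 t0))

/-- `(S,T)` is a generalized JHℑ-suboperator pair with order `n` on `M`:
for each `k ∈ [0,1]`, `(S, T_k)` with `T_k x = f_{Tx}(k)` is a generalized
JH-operator pair with order `n`. -/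
def GenJHImSubOp (f : X → ℝ → X) (S T : X → X) (M : Set X) (n : ℕ) : Prop :=
  ∀ k ∈ Icc (0:ℝ) 1, GenJHOp S (fun x => f (T x) k) M n

/-- Weak convergence of a sequence. -/
def WeakTendsTo (x : ℕ → X) (a : X) : Prop :=
  ∀ f : StrongDual ℝ X, Tendsto (fun n => f (x n)) atTop (𝓝 (f a))

/-- Weak (sequential) closure. -/
def WSeqCl (A : Set X) : Set X := {a | ∃ x : ℕ → X, (∀ n, x n ∈ A) ∧ WeakTendsTo x a}

/-- Weak (sequential) compactness. -/
def WSeqCompact (A : Set X) : Prop :=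
  ∀ x : ℕ → X, (∀ n, x n ∈ A) →
    ∃ a ∈ A, ∃ g : ℕ → ℕ, StrictMono g ∧ WeakTendsTo (x ∘ g) a

/-- `T` is completely continuous on `M`: weak convergence implies strong
convergence of images. -/
def CompletelyContinuousOn (T : X → X) (M : Set X) : Prop :=
  ∀ (x : ℕ → X) (a : X), (∀ n, x n ∈ M) → a ∈ M → WeakTendsTo x a →
    Tendsto (fun n => T (x n)) atTop (𝓝 (T a))

/-- `S` is weakly continuous on `M`. -/
def WeaklyContinuousOn (S : X → X) (M : Set X) : Prop :=
  ∀ (x : ℕ → X) (a : X), (∀ n, x n ∈ M) → a ∈ M → WeakTendsTo x a →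
    WeakTendsTo (fun n => S (x n)) (S a)

/-- `G` is demiclosed at `0` on `M`. -/
def DemiclosedAtZero (G : X → X) (M : Set X) : Prop :=
  ∀ (x : ℕ → X) (a : X), (∀ n, x n ∈ M) → a ∈ M → WeakTendsTo x a →
    Tendsto (fun n => G (x n)) atTop (𝓝 (0 : X)) → G a = 0

/-- `T` is hemicompact on `M`. -/
def Hemicompact (T : X → X) (M : Set X) : Prop :=
  ∀ x : ℕ → X, (∀ n, x n ∈ M) →
    Tendsto (fun n => ‖x n - T (x n)‖) atTop (𝓝 (0 : ℝ)) →
    ∃ (a : X) (g : ℕ → ℕ), StrictMono g ∧ Tendsto (x ∘ g) atTop (𝓝 a)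

/-- Opial's condition. -/
def OpialCondition (Y : Type*) [NormedAddCommGroup Y] [NormedSpace ℝ Y] : Prop :=
  ∀ (x : ℕ → Y) (a : Y), WeakTendsTo x a → ∀ y : Y, y ≠ a →
    liminf (fun n => ‖x n - a‖) atTop < liminf (fun n => ‖x n - y‖) atTop

/-- `P_M(u)`, the set of best approximations to `u` out of `M`. -/
def PMset (M : Set X) (u : X) : Set X := {x ∈ M | ‖x - u‖ = Metric.infDist u M}

/-- `C_M^S(u) = {x ∈ M : Sx ∈ P_M(u)}`. -/
def CMSset (M : Set X) (S : X → X) (u : X) : Set X := {x ∈ M | S x ∈ PMset M u}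



/-- Auxiliary iteration: `x₀ = q`, `x_{n+1} = (1 - kₙ) q + kₙ T xₙ`. -/
def auxSeq {X : Type*} [NormedAddCommGroup X] [NormedSpace ℝ X]
    (T : X → X) (q : X) (k : ℕ → ℝ) : ℕ → X
  | 0 => q
  | n + 1 => (1 - k n) • q + k n • T (auxSeq T q k n)

theorem stmt_8 {X : Type*} [NormedAddCommGroup X] [NormedSpace ℝ X]
    (M : Set X) (q : X) (hstar : Starshaped M q) (T : X → X) (hT : MapsTo T M M)
    (phi : ℝ → ℝ) (hphi : PhiAdmissible phi)
    (γ : ℝ → ℝ) (hγ : GammaAdmissible γ) (hγcont : ContinuousOn γ (Ioi 0))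
    (hcontr : ∀ x ∈ M, ∀ y ∈ M, ∀ k ∈ Ioo (0:ℝ) 1,
      intPhi phi ‖T x - T y‖ ≤ intPhi phi ((1 / k) * γ ‖x - y‖))
    (hMb : Bornology.IsBounded M) (hMc : IsComplete M) (hTh : Hemicompact T M) :
    ∃ x ∈ M, T x = x := by
  obtain ⟨hqM, hstarseg⟩ := hstar
  obtain ⟨hphi0, hphiInt, hphiPos⟩ := hphi
  obtain ⟨hγpos, hγmono, hγlt⟩ := hγ
  -- Basic facts about F := intPhi phi
  have hInt : ∀ a b : ℝ, IntervalIntegrable phi volume a b := fun a b =>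
    (hphiInt a).symm.trans (hphiInt b)
  have hFcont : Continuous (intPhi phi) := by
    exact intervalIntegral.continuous_primitive hInt 0
  have hF0 : intPhi phi 0 = 0 := by simp [intPhi]
  have hFmono : ∀ a b : ℝ, 0 ≤ a → a ≤ b → intPhi phi a ≤ intPhi phi b := by
    intro a b ha hab
    have hadd : intPhi phi a + ∫ t in a..b, phi t = intPhi phi b :=
      intervalIntegral.integral_add_adjacent_intervals (hphiInt a) (hInt a b)
    have hnn : 0 ≤ ∫ t in a..b, phi t :=
      intervalIntegral.integral_nonneg hab (fun u hu => hphi0 u (ha.trans hu.1))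
    linarith
  -- A bound on distances within M
  obtain ⟨C, hC⟩ := Metric.isBounded_iff.mp hMb
  set D : ℝ := max C 1 with hD
  have hD0 : (0:ℝ) < D := lt_of_lt_of_le one_pos (le_max_right _ _)
  have hDb : ∀ u ∈ M, ∀ v ∈ M, ‖u - v‖ ≤ D := by
    intro u hu v hv
    rw [← dist_eq_norm]
    exact (hC hu hv).trans (le_max_left _ _)
  -- L1 points: arbitrarily small σ > 0 with F strictly bigger to the right of σ
  have hL1 : ∀ ε : ℝ, 0 < ε →
      ∃ σ : ℝ, 0 < σ ∧ σ ≤ ε ∧ ∀ t, σ < t → intPhi phi σ < intPhi phi t := by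
    intro ε hε
    set c : ℝ := intPhi phi ε / 2 with hc
    have hcpos : 0 < c := half_pos (hphiPos ε hε)
    set S : Set ℝ := {t : ℝ | t ∈ Icc (0:ℝ) ε ∧ intPhi phi t ≤ c} with hS
    have hS0 : (0:ℝ) ∈ S := ⟨⟨le_refl 0, hε.le⟩, by rw [hF0]; exact hcpos.le⟩
    have hSc : IsClosed S := by
      have : S = Icc (0:ℝ) ε ∩ (intPhi phi) ⁻¹' (Iic c) := rfl
      rw [this]
      exact isClosed_Icc.inter (isClosed_Iic.preimage hFcont)
    have hSbdd : BddAbove S := ⟨ε, fun t ht => ht.1.2⟩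
    set σ : ℝ := sSup S with hσdef
    have hσS : σ ∈ S := hSc.csSup_mem ⟨0, hS0⟩ hSbdd
    have hσpos : 0 < σ := by
      have hnb : ∀ᶠ t in 𝓝 (0:ℝ), intPhi phi t < c := by
        have h1 : Tendsto (intPhi phi) (𝓝 0) (𝓝 0) := by
          simpa [hF0] using hFcont.tendsto 0
        exact h1 (Iio_mem_nhds hcpos)
      obtain ⟨δ, hδpos, hδ⟩ := Metric.eventually_nhds_iff.mp hnb
      have htS : min (δ/2) ε ∈ S := by
        refine ⟨⟨le_of_lt (by positivity), min_le_right _ _⟩, ?_⟩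
        refine le_of_lt (hδ ?_)
        rw [Real.dist_eq, sub_zero, abs_of_pos (by positivity)]
        exact lt_of_le_of_lt (min_le_left _ _) (by linarith)
      have := le_csSup hSbdd htS
      have hmpos : (0:ℝ) < min (δ/2) ε := by positivity
      linarith
    refine ⟨σ, hσpos, hσS.1.2, ?_⟩
    intro t ht
    rcases le_or_gt t ε with htε | htε
    · have htS : t ∉ S := fun hmem => absurd (le_csSup hSbdd hmem) (not_le.mpr ht)
      have h1 : ¬ intPhi phi t ≤ c := by
        intro hle; exact htS ⟨⟨(hσpos.trans ht).le, htε⟩, hle⟩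
      have := hσS.2
      linarith [not_le.mp h1]
    · have h1 : intPhi phi ε ≤ intPhi phi t := hFmono ε t hε.le htε.le
      have := hσS.2
      rw [hc] at *
      linarith
  -- Key contraction property at L1 points
  have hK : ∀ σ : ℝ, 0 < σ → (∀ t, σ < t → intPhi phi σ < intPhi phi t) →
      ∀ x ∈ M, ∀ y ∈ M, ‖x - y‖ ≤ σ → ‖T x - T y‖ ≤ σ := by
    intro σ hσ hσL1 x hx y hy hxy
    rcases eq_or_ne x y with rfl | hne
    · simpa using hσ.le
    · have hs : 0 < ‖x - y‖ := by
        rw [norm_sub_pos_iff]; exact hne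
      have hγs : 0 < γ ‖x - y‖ := hγpos _ hs
      have hγσ : γ ‖x - y‖ < σ := lt_of_lt_of_le (hγlt _ hs) hxy
      have hk : γ ‖x - y‖ / σ ∈ Ioo (0:ℝ) 1 :=
        ⟨div_pos hγs hσ, (div_lt_one hσ).mpr hγσ⟩
      have h := hcontr x hx y hy _ hk
      have heq : (1 / (γ ‖x - y‖ / σ)) * γ ‖x - y‖ = σ := by
        field_simp
      rw [heq] at h
      by_contra hgt
      push_neg at hgt
      exact absurd h (not_le.mpr (hσL1 _ hgt))
  -- Approximate fixed points
  have happrox : ∀ ε : ℝ, 0 < ε → ∃ x ∈ M, ‖x - T x‖ ≤ ε := by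
    intro ε hε
    obtain ⟨σ, hσ0, hσle, hσL1⟩ := hL1 (min (ε/2) (D/2)) (by positivity)
    have hσε : σ ≤ ε/2 := hσle.trans (min_le_left _ _)
    have hσD : σ ≤ D/2 := hσle.trans (min_le_right _ _)
    set κ : ℝ := σ / (2*D) with hκdef
    set K : ℝ := 1 - σ / D with hKdef
    set δ₀ : ℝ := (σ/D)^2 with hδ₀def
    have hκpos : 0 < κ := by positivity
    have hKlt1 : K < 1 := by
      have : 0 < σ / D := by positivity
      simp only [hKdef]; linarith
    have hκK : κ ≤ K := by
      rw [hκdef, hKdef]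
      rw [div_le_iff₀ (by positivity)]
      have h1 : σ / D ≤ 1/2 := by
        rw [div_le_iff₀ hD0]; linarith
      nlinarith
    have hδ₀pos : 0 < δ₀ := by positivity
    set kk : ℕ → ℝ := fun m => min K (κ + δ₀ * ((m - 1 : ℕ) : ℝ)) with hkk
    have hkk0 : kk 0 = κ := by
      have hz : ((0 - 1 : ℕ) : ℝ) = 0 := by norm_num
      simp only [hkk, hz, mul_zero, add_zero]
      exact min_eq_right hκK
    have hkklb : ∀ m, κ ≤ kk m := by
      intro m
      have h1 : κ ≤ κ + δ₀ * ((m - 1 : ℕ) : ℝ) := le_add_of_nonneg_right (by positivity)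
      rcases le_total K (κ + δ₀ * ((m - 1 : ℕ) : ℝ)) with h | h
      · simp only [hkk]; rw [min_eq_left h]; exact hκK
      · simp only [hkk]; rw [min_eq_right h]; linarith
    have hkkpos : ∀ m, 0 < kk m := fun m => lt_of_lt_of_le hκpos (hkklb m)
    have hkkub : ∀ m, kk m ≤ K := fun m => min_le_left _ _
    have hkklt1 : ∀ m, kk m < 1 := fun m => lt_of_le_of_lt (hkkub m) hKlt1
    have hkkstep : ∀ m, kk m ≤ kk (m+1) ∧ kk (m+1) ≤ kk m + δ₀ := by
      intro m
      have hc1 : ((m - 1 : ℕ) : ℝ) ≤ (((m+1) - 1 : ℕ) : ℝ) := by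
        exact_mod_cast Nat.sub_le_sub_right (Nat.le_succ m) 1
      have hc2 : (((m+1) - 1 : ℕ) : ℝ) ≤ ((m - 1 : ℕ) : ℝ) + 1 := by
        have : (m + 1) - 1 ≤ (m - 1) + 1 := by omega
        exact_mod_cast this
      constructor
      · simp only [hkk]
        exact min_le_min (le_refl K) (by nlinarith)
      · simp only [hkk]
        have harg : κ + δ₀ * (((m+1) - 1 : ℕ) : ℝ) ≤ (κ + δ₀ * ((m - 1 : ℕ) : ℝ)) + δ₀ := by
          nlinarith
        rcases le_total K (κ + δ₀ * ((m - 1 : ℕ) : ℝ)) with h | h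
        · rw [min_eq_left h]
          exact le_trans (min_le_left _ _) (by linarith)
        · rw [min_eq_right h]
          exact le_trans (min_le_right _ _) harg
    -- membership of the iteration in M
    have hxM : ∀ m, auxSeq T q kk m ∈ M := by
      intro m
      induction m with
      | zero => exact hqM
      | succ n ih =>
        have hTn : T (auxSeq T q kk n) ∈ M := hT ih
        apply hstarseg _ hTn
        exact ⟨1 - kk n, kk n, by linarith [hkklt1 n], (hkkpos n).le, by ring, rfl⟩
    -- invariant: consecutive distances stay ≤ σ
    have harith : K * σ + δ₀ * D = σ := by
      rw [hKdef, hδ₀def]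
      field_simp
      ring
    have hdinv : ∀ m, ‖auxSeq T q kk m - auxSeq T q kk (m+1)‖ ≤ σ := by
      intro m
      induction m with
      | zero =>
        have he : auxSeq T q kk 0 - auxSeq T q kk 1 = kk 0 • (q - T q) := by
          show q - ((1 - kk 0) • q + kk 0 • T q) = kk 0 • (q - T q)
          rw [sub_smul, one_smul, smul_sub]
          abel
        rw [he, norm_smul, Real.norm_eq_abs, abs_of_pos (hkkpos 0), hkk0]
        have h1 : ‖q - T q‖ ≤ D := hDb q hqM _ (hT hqM)
        have h2 : κ * ‖q - T q‖ ≤ κ * D := by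
          exact mul_le_mul_of_nonneg_left h1 hκpos.le
        have h3 : κ * D = σ / 2 := by
          rw [hκdef]; field_simp; try ring
        linarith
      | succ n ih =>
        have hTle : ‖T (auxSeq T q kk n) - T (auxSeq T q kk (n+1))‖ ≤ σ :=
          hK σ hσ0 hσL1 _ (hxM n) _ (hxM (n+1)) ih
        have he : auxSeq T q kk (n+1) - auxSeq T q kk (n+2)
            = kk (n+1) • (T (auxSeq T q kk n) - T (auxSeq T q kk (n+1)))
              + (kk n - kk (n+1)) • (T (auxSeq T q kk n) - q) := by
          show ((1 - kk n) • q + kk n • T (auxSeq T q kk n))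
              - ((1 - kk (n+1)) • q + kk (n+1) • T (auxSeq T q kk (n+1))) = _
          module
        rw [he]
        refine le_trans (norm_add_le _ _) ?_
        rw [norm_smul, norm_smul, Real.norm_eq_abs, Real.norm_eq_abs]
        have h1 : |kk (n+1)| = kk (n+1) := abs_of_pos (hkkpos (n+1))
        have h2 : |kk n - kk (n+1)| ≤ δ₀ := by
          rw [abs_sub_comm, abs_of_nonneg (by linarith [(hkkstep n).1])]
          linarith [(hkkstep n).2]
        have h3 : ‖T (auxSeq T q kk n) - q‖ ≤ D := hDb _ (hT (hxM n)) q hqM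
        have h4 : |kk (n+1)| * ‖T (auxSeq T q kk n) - T (auxSeq T q kk (n+1))‖ ≤ K * σ := by
          rw [h1]
          exact mul_le_mul (hkkub (n+1)) hTle (norm_nonneg _) (by linarith [hκpos, hκK])
        have h5 : |kk n - kk (n+1)| * ‖T (auxSeq T q kk n) - q‖ ≤ δ₀ * D := by
          exact mul_le_mul h2 h3 (norm_nonneg _) hδ₀pos.le
        linarith
    -- eventually kk m = K
    obtain ⟨N, hN⟩ := exists_nat_ge ((K - κ)/δ₀)
    have hkkN : kk (N+1) = K := by
      simp only [hkk]
      apply min_eq_left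
      have h1 : ((N + 1 - 1 : ℕ) : ℝ) = (N : ℝ) := by norm_num
      rw [h1]
      have h2 : K - κ ≤ δ₀ * N := by
        rw [div_le_iff₀ hδ₀pos] at hN
        linarith [hN]
      linarith
    refine ⟨auxSeq T q kk (N+1), hxM (N+1), ?_⟩
    have he2 : auxSeq T q kk (N+2) - T (auxSeq T q kk (N+1))
        = (1 - kk (N+1)) • (q - T (auxSeq T q kk (N+1))) := by
      show ((1 - kk (N+1)) • q + kk (N+1) • T (auxSeq T q kk (N+1)))
          - T (auxSeq T q kk (N+1)) = _
      rw [smul_sub, sub_smul, sub_smul, one_smul, one_smul]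
      abel
    have h6 : ‖auxSeq T q kk (N+2) - T (auxSeq T q kk (N+1))‖ ≤ σ := by
      rw [he2, norm_smul, Real.norm_eq_abs, abs_of_nonneg (by linarith [hkklt1 (N+1)])]
      rw [hkkN, hKdef]
      have h7 : ‖q - T (auxSeq T q kk (N+1))‖ ≤ D := hDb q hqM _ (hT (hxM (N+1)))
      have h8 : (1 - (1 - σ/D)) = σ/D := by ring
      rw [h8]
      calc σ/D * ‖q - T (auxSeq T q kk (N+1))‖ ≤ σ/D * D := by
            exact mul_le_mul_of_nonneg_left h7 (by positivity)
        _ = σ := by field_simp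
    calc ‖auxSeq T q kk (N+1) - T (auxSeq T q kk (N+1))‖
        ≤ ‖auxSeq T q kk (N+1) - auxSeq T q kk (N+2)‖
          + ‖auxSeq T q kk (N+2) - T (auxSeq T q kk (N+1))‖ := by
            simpa using norm_sub_le_norm_sub_add_norm_sub _ _ _
      _ ≤ σ + σ := add_le_add (hdinv (N+1)) h6
      _ ≤ ε := by linarith
  -- an approximate fixed point sequence
  have hy : ∀ n : ℕ, ∃ x ∈ M, ‖x - T x‖ ≤ 1/((n:ℝ)+1) := fun n => happrox _ (by positivity)
  choose y hyM hyb using hy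
  have htend : Tendsto (fun n => ‖y n - T (y n)‖) atTop (𝓝 (0:ℝ)) :=
    squeeze_zero (fun n => norm_nonneg _) hyb tendsto_one_div_add_atTop_nhds_zero_nat
  obtain ⟨a, g, hg, hag⟩ := hTh y hyM htend
  have haM : a ∈ M :=
    hMc.isClosed.mem_of_tendsto hag (Eventually.of_forall fun n => hyM (g n))
  refine ⟨a, haM, ?_⟩
  have hkey : ∀ ε : ℝ, 0 < ε → ‖T a - a‖ ≤ 0 + ε := by
    intro ε hε
    obtain ⟨σ, hσ0, hσle, hσL1⟩ := hL1 (ε/3) (by positivity)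
    obtain ⟨n1, hn1⟩ := (Metric.tendsto_atTop.mp hag) σ hσ0
    obtain ⟨n2, hn2⟩ := exists_nat_one_div_lt (show (0:ℝ) < ε/3 by positivity)
    set n : ℕ := max n1 n2 with hndef
    have h1 : ‖y (g n) - a‖ ≤ σ := by
      have := hn1 n (le_max_left _ _)
      rw [Function.comp_apply, dist_eq_norm] at this
      exact this.le
    have h2 : ‖y (g n) - T (y (g n))‖ ≤ ε/3 := by
      refine (hyb (g n)).trans ?_
      have hgn : (n2 : ℝ) ≤ (g n : ℝ) := by
        exact_mod_cast (le_max_right n1 n2).trans (hg.le_apply)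
      have : 1/((g n : ℝ)+1) ≤ 1/((n2:ℝ)+1) := by
        apply one_div_le_one_div_of_le (by positivity)
        linarith
      linarith
    have h3 : ‖T (y (g n)) - T a‖ ≤ σ := hK σ hσ0 hσL1 _ (hyM _) a haM h1
    have h4 : ‖T a - a‖ ≤ ‖T a - T (y (g n))‖ + ‖T (y (g n)) - y (g n)‖ + ‖y (g n) - a‖ := by
      have t1 : ‖T a - a‖ ≤ ‖T a - y (g n)‖ + ‖y (g n) - a‖ :=
        norm_sub_le_norm_sub_add_norm_sub _ _ _
      have t2 : ‖T a - y (g n)‖ ≤ ‖T a - T (y (g n))‖ + ‖T (y (g n)) - y (g n)‖ :=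
        norm_sub_le_norm_sub_add_norm_sub _ _ _
      linarith
    have h5 : ‖T a - T (y (g n))‖ ≤ σ := by rw [norm_sub_rev]; exact h3
    have h6 : ‖T (y (g n)) - y (g n)‖ ≤ ε/3 := by rw [norm_sub_rev]; exact h2
    have hσε : σ ≤ ε/3 := hσle
    linarith
  have h0 : ‖T a - a‖ ≤ 0 := le_of_forall_pos_le_add hkey
  have : T a - a = 0 := by
    have := le_antisymm h0 (norm_nonneg _)
    exact norm_eq_zero.mp this
  exact sub_eq_zero.mp this

end
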